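/- Let p, q, k, i, m, s be positive integers with 0 ≤ s < p, and let d = gcd(p+q, k). If i·q + (i-1)·p = m·k - s, then d divides p - s; consequently, if d > p, no such i, m, s can exist with 0 ≤ s < p (since then 0 < p - s < d would be divisible by d). -/

import Mathlib

theorem stmt_0 (p q k i m s : ℤ) (hp : 0 < p) (hq : 0 < q) (hk : 0 < k)
    (hi : 0 < i) (hm : 0 < m) (hs0 : 0 ≤ s) (hsp : s < p)
    (heq : i * q + (i - 1) * p = m * k - s) :
    ((Int.gcd (p + q) k : ℤ) ∣ (p - s)) ∧
      ((p < (Int.gcd (p + q) k : ℤ)) → False) := by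
  have h1 : ((Int.gcd (p + q) k : ℤ)) ∣ (p + q) := Int.gcd_dvd_left _ _
  have h2 : ((Int.gcd (p + q) k : ℤ)) ∣ k := Int.gcd_dvd_right _ _
  have hps : p - s = i * (p + q) - m * k := by linear_combination -heq
  have hdvd : ((Int.gcd (p + q) k : ℤ)) ∣ (p - s) := by
    rw [hps]; exact dvd_sub (Dvd.dvd.mul_left h1 i) (Dvd.dvd.mul_left h2 m)
  refine ⟨hdvd, fun hlt => ?_⟩
  have := Int.le_of_dvd (by linarith) hdvd
  linarith
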